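/- Early-default advantage (Figure 9, reduced dynamics): in the symmetric system where v₁ and v₂ each have liability 1 and zero assets initially, if v₁ updates first then the forced sequence of updates is v₁ → u₂ → w₂ → v₁ → v₂ and the final stable state has r_{v₁} = 1 and r_{v₂} = 0; by symmetry, if v₂ updates first the final state has r_{v₁} = 0, r_{v₂} = 1. Hence v₁ avoids default in the final state if and only if v₁ is the first bank to report a default. -/
import Mathlib


namespace Fig9

/-- The six banks of the Figure 9 system. -/
inductive Bank | v1 | v2 | u1 | u2 | w1 | w2
deriving DecidableEq

open Bank

/-- A state: the announced recovery rate of each bank. -/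
abbrev St := Bank → ℝ

/-- The paper's recovery-rate function: `R(a,l) = 1` if `a ≥ l`, else `a/l` (so `R(a,0)=1`). -/
noncomputable def Rfun (a l : ℝ) : ℝ := if a ≥ l then 1 else a / l

/-- Assets in the (symmetric) Figure 9 system: `v₁` receives CDS payments referencing `v₂`
and `w₂` (symmetrically for `v₂`), `u₁` receives a CDS payment referencing `u₂`
(symmetrically for `u₂`), and `w₁, w₂` have no assets. -/
def assets (r : St) : Bank → ℝ
  | v1 => (1 - r v2) + (1 - r w2)
  | v2 => (1 - r v1) + (1 - r w1)
  | u1 => 1 - r u2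
  | u2 => 1 - r u1
  | w1 => 0
  | w2 => 0

/-- Liabilities: `v₁, v₂` each owe a debt of 1; `u₁` owes CDSs referencing `v₂` and `w₁`
(symmetrically `u₂` references `v₁` and `w₂`); `w₁` owes a CDS referencing `u₁`
(symmetrically `w₂` references `u₂`). -/
def liab (r : St) : Bank → ℝ
  | v1 => 1
  | v2 => 1
  | u1 => (1 - r v2) + (1 - r w1)
  | u2 => (1 - r v1) + (1 - r w2)
  | w1 => 1 - r u1
  | w2 => 1 - r u2

/-- Bank `b` is updatable at `r` iff its announced rate differs from `R(a_b(r), l_b(r))`. -/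
noncomputable def updatable (b : Bank) (r : St) : Prop :=
  r b ≠ Rfun (assets r b) (liab r b)

/-- Updating bank `b`. -/
noncomputable def upd (b : Bank) (r : St) : St :=
  Function.update r b (Rfun (assets r b) (liab r b))

/-- Sequential reachability (reflexive-transitive closure of single updates). -/
inductive Reach : St → St → Prop
  | refl (r) : Reach r r
  | step (r s : St) (b : Bank) : Reach r s → updatable b s → Reach r (upd b s)

/-- The initial state. -/
def init : St := fun _ => 1

end Fig9
namespace Fig9
open Bank

def S1 : St := fun b => match b with | v1 => 0 | _ => 1
def S2 : St := fun b => match b with | v1 => 0 | u2 => 0 | _ => 1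
def S3 : St := fun b => match b with | v1 => 0 | u2 => 0 | w2 => 0 | _ => 1
def S4 : St := fun b => match b with | u2 => 0 | w2 => 0 | _ => 1
def S5 : St := fun b => match b with | v2 => 0 | u2 => 0 | w2 => 0 | _ => 1
def T1 : St := fun b => match b with | v2 => 0 | _ => 1
def T2 : St := fun b => match b with | v2 => 0 | u1 => 0 | _ => 1
def T3 : St := fun b => match b with | v2 => 0 | u1 => 0 | w1 => 0 | _ => 1
def T4 : St := fun b => match b with | u1 => 0 | w1 => 0 | _ => 1
def T5 : St := fun b => match b with | v1 => 0 | u1 => 0 | w1 => 0 | _ => 1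

lemma e1 : upd v1 init = S1 := by
  funext b; cases b <;> simp [upd, Function.update, init, Rfun, assets, liab, S1] <;> norm_num
lemma e2 : upd u2 S1 = S2 := by
  funext b; cases b <;> simp [upd, Function.update, Rfun, assets, liab, S1, S2] <;> norm_num
lemma e3 : upd w2 S2 = S3 := by
  funext b; cases b <;> simp [upd, Function.update, Rfun, assets, liab, S2, S3] <;> norm_num
lemma e4 : upd v1 S3 = S4 := by
  funext b; cases b <;> simp [upd, Function.update, Rfun, assets, liab, S3, S4] <;> norm_num
lemma e5 : upd v2 S4 = S5 := by
  funext b; cases b <;> simp [upd, Function.update, Rfun, assets, liab, S4, S5] <;> norm_num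

lemma f1 : upd v2 init = T1 := by
  funext b; cases b <;> simp [upd, Function.update, init, Rfun, assets, liab, T1] <;> norm_num
lemma f2 : upd u1 T1 = T2 := by
  funext b; cases b <;> simp [upd, Function.update, Rfun, assets, liab, T1, T2] <;> norm_num
lemma f3 : upd w1 T2 = T3 := by
  funext b; cases b <;> simp [upd, Function.update, Rfun, assets, liab, T2, T3] <;> norm_num
lemma f4 : upd v2 T3 = T4 := by
  funext b; cases b <;> simp [upd, Function.update, Rfun, assets, liab, T3, T4] <;> norm_num
lemma f5 : upd v1 T4 = T5 := by
  funext b; cases b <;> simp [upd, Function.update, Rfun, assets, liab, T4, T5] <;> norm_num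

lemma U0 : ∀ b, updatable b init ↔ (b = v1 ∨ b = v2) := by
  intro b; cases b <;> simp [updatable, init, assets, liab, Rfun] <;> norm_num
lemma U1 : ∀ b, updatable b S1 ↔ b = u2 := by
  intro b; cases b <;> simp [updatable, S1, assets, liab, Rfun] <;> norm_num
lemma U2 : ∀ b, updatable b S2 ↔ b = w2 := by
  intro b; cases b <;> simp [updatable, S2, assets, liab, Rfun] <;> norm_num
lemma U3 : ∀ b, updatable b S3 ↔ b = v1 := by
  intro b; cases b <;> simp [updatable, S3, assets, liab, Rfun] <;> norm_num
lemma U4 : ∀ b, updatable b S4 ↔ b = v2 := by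
  intro b; cases b <;> simp [updatable, S4, assets, liab, Rfun] <;> norm_num
lemma U5 : ∀ b, ¬ updatable b S5 := by
  intro b; cases b <;> simp [updatable, S5, assets, liab, Rfun] <;> norm_num
lemma V1 : ∀ b, updatable b T1 ↔ b = u1 := by
  intro b; cases b <;> simp [updatable, T1, assets, liab, Rfun] <;> norm_num
lemma V2 : ∀ b, updatable b T2 ↔ b = w1 := by
  intro b; cases b <;> simp [updatable, T2, assets, liab, Rfun] <;> norm_num
lemma V3 : ∀ b, updatable b T3 ↔ b = v2 := by
  intro b; cases b <;> simp [updatable, T3, assets, liab, Rfun] <;> norm_num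
lemma V4 : ∀ b, updatable b T4 ↔ b = v1 := by
  intro b; cases b <;> simp [updatable, T4, assets, liab, Rfun] <;> norm_num
lemma V5 : ∀ b, ¬ updatable b T5 := by
  intro b; cases b <;> simp [updatable, T5, assets, liab, Rfun] <;> norm_num

lemma chainS : ∀ s, Reach S1 s → s = S1 ∨ s = S2 ∨ s = S3 ∨ s = S4 ∨ s = S5 := by
  intro s h
  induction h with
  | refl => exact Or.inl rfl
  | step t b _ hb ih =>
    rcases ih with h|h|h|h|h <;> subst h
    · rw [(U1 b).mp hb]; exact Or.inr (Or.inl e2)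
    · rw [(U2 b).mp hb]; exact Or.inr (Or.inr (Or.inl e3))
    · rw [(U3 b).mp hb]; exact Or.inr (Or.inr (Or.inr (Or.inl e4)))
    · rw [(U4 b).mp hb]; exact Or.inr (Or.inr (Or.inr (Or.inr e5)))
    · exact absurd hb (U5 b)

lemma chainT : ∀ s, Reach T1 s → s = T1 ∨ s = T2 ∨ s = T3 ∨ s = T4 ∨ s = T5 := by
  intro s h
  induction h with
  | refl => exact Or.inl rfl
  | step t b _ hb ih =>
    rcases ih with h|h|h|h|h <;> subst h
    · rw [(V1 b).mp hb]; exact Or.inr (Or.inl f2)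
    · rw [(V2 b).mp hb]; exact Or.inr (Or.inr (Or.inl f3))
    · rw [(V3 b).mp hb]; exact Or.inr (Or.inr (Or.inr (Or.inl f4)))
    · rw [(V4 b).mp hb]; exact Or.inr (Or.inr (Or.inr (Or.inr f5)))
    · exact absurd hb (V5 b)

end Fig9

open Fig9 Fig9.Bank in
/-- in the Figure 9 system, only `v₁` and `v₂` can update initially; if `v₁`
updates first, the forced sequence of updates is `v₁ → u₂ → w₂ → v₁ → v₂` (at each
intermediate state exactly the indicated bank is updatable), the resulting state is stable,
and every stable state reachable after `v₁`'s first update has `r_{v₁} = 1` and `r_{v₂} = 0`;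
by symmetry, if `v₂` updates first, every reachable stable state has `r_{v₁} = 0` and
`r_{v₂} = 1`.  Hence `v₁` avoids default in the final state iff it defaults first. -/
theorem stmt16 :
    (∀ b, updatable b init ↔ (b = v1 ∨ b = v2)) ∧
    (∀ b, updatable b (upd v1 init) ↔ b = u2) ∧
    (∀ b, updatable b (upd u2 (upd v1 init)) ↔ b = w2) ∧
    (∀ b, updatable b (upd w2 (upd u2 (upd v1 init))) ↔ b = v1) ∧
    (∀ b, updatable b (upd v1 (upd w2 (upd u2 (upd v1 init)))) ↔ b = v2) ∧
    (∀ b, ¬ updatable b (upd v2 (upd v1 (upd w2 (upd u2 (upd v1 init)))))) ∧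
    (upd v2 (upd v1 (upd w2 (upd u2 (upd v1 init)))) v1 = 1 ∧
     upd v2 (upd v1 (upd w2 (upd u2 (upd v1 init)))) v2 = 0) ∧
    (∀ s, Reach (upd v1 init) s → (∀ b, ¬ updatable b s) → (s v1 = 1 ∧ s v2 = 0)) ∧
    (∀ s, Reach (upd v2 init) s → (∀ b, ¬ updatable b s) → (s v1 = 0 ∧ s v2 = 1)) := by

  refine ⟨Fig9.U0, ?_, ?_, ?_, ?_, ?_, ?_, ?_, ?_⟩
  · rw [Fig9.e1]; exact Fig9.U1
  · rw [Fig9.e1, Fig9.e2]; exact Fig9.U2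
  · rw [Fig9.e1, Fig9.e2, Fig9.e3]; exact Fig9.U3
  · rw [Fig9.e1, Fig9.e2, Fig9.e3, Fig9.e4]; exact Fig9.U4
  · rw [Fig9.e1, Fig9.e2, Fig9.e3, Fig9.e4, Fig9.e5]; exact Fig9.U5
  · rw [Fig9.e1, Fig9.e2, Fig9.e3, Fig9.e4, Fig9.e5]; exact ⟨rfl, rfl⟩
  · intro s hr hst
    rw [Fig9.e1] at hr
    rcases Fig9.chainS s hr with h|h|h|h|h <;> subst h
    · exact absurd ((Fig9.U1 u2).mpr rfl) (hst u2)
    · exact absurd ((Fig9.U2 w2).mpr rfl) (hst w2)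
    · exact absurd ((Fig9.U3 v1).mpr rfl) (hst v1)
    · exact absurd ((Fig9.U4 v2).mpr rfl) (hst v2)
    · exact ⟨rfl, rfl⟩
  · intro s hr hst
    rw [Fig9.f1] at hr
    rcases Fig9.chainT s hr with h|h|h|h|h <;> subst h
    · exact absurd ((Fig9.V1 u1).mpr rfl) (hst u1)
    · exact absurd ((Fig9.V2 w1).mpr rfl) (hst w1)
    · exact absurd ((Fig9.V3 v2).mpr rfl) (hst v2)
    · exact absurd ((Fig9.V4 v1).mpr rfl) (hst v1)
    · exact ⟨rfl, rfl⟩
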